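/- (Equation (44): fully broad beam.) Let N, M ≥ 1, let (u, v) be a Golay complementary pair of unimodular sequences of length N, and let (w_PA, w_PB) be a Golay complementary pair of unimodular sequences of length M. Define sequences w_A, w_B of length 2NM by: for 0 ≤ l ≤ N−1 and 0 ≤ m ≤ M−1, w_A(lM+m) = u(l)·w_PA(m), w_A(NM+lM+m) = −v(l)·conj(w_PB(M−1−m)), w_B(lM+m) = u(l)·w_PB(m), w_B(NM+lM+m) = v(l)·conj(w_PA(M−1−m)). Then for every ψ ∈ ℝ, |F_{w_A}(ψ)|² + |F_{w_B}(ψ)|² = 4NM; i.e. the expanded array's sum power-domain array factor is spatially flat. -/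

import Mathlib

/-- The array factor of a length-`M` sequence `u` at spatial frequency `ψ`:
`F_u(ψ) = Σ_{m=0}^{M-1} u(m) · exp(i·m·ψ)`. -/
noncomputable def arrayFactor (M : ℕ) (u : ℕ → ℂ) (ψ : ℝ) : ℂ :=
  ∑ m ∈ Finset.range M, u m * Complex.exp (Complex.I * (m : ℂ) * (ψ : ℂ))

/-- The aperiodic autocorrelation of a length-`M` sequence `u` at shift `τ`:
`R_u(τ) = Σ_{m=0}^{M-1-τ} u(m) · conj(u(m+τ))`. -/
noncomputable def aacf (M : ℕ) (u : ℕ → ℂ) (τ : ℕ) : ℂ :=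
  ∑ m ∈ Finset.range (M - τ), u m * (starRingEnd ℂ) (u (m + τ))

open Finset Complex

lemma expI_conj (a : ℕ) (t : ℝ) :
    (starRingEnd ℂ) (Complex.exp (Complex.I * a * t)) = Complex.exp (-(Complex.I * a * t)) := by
  rw [← Complex.exp_conj]
  congr 1
  simp [map_mul]

lemma expI_mul_conj (a : ℕ) (t : ℝ) :
    Complex.exp (Complex.I * a * t) * (starRingEnd ℂ) (Complex.exp (Complex.I * a * t)) = 1 := by
  rw [expI_conj, ← Complex.exp_add]
  simp

lemma expI_add (a b : ℕ) (t : ℝ) :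
    Complex.exp (Complex.I * (↑(a + b) : ℂ) * t)
      = Complex.exp (Complex.I * a * t) * Complex.exp (Complex.I * b * t) := by
  rw [← Complex.exp_add]
  congr 1
  push_cast
  ring

lemma sum_range_mul' (N M : ℕ) (g : ℕ → ℂ) :
    ∑ k ∈ Finset.range (N * M), g k
      = ∑ l ∈ Finset.range N, ∑ m ∈ Finset.range M, g (l * M + m) := by
  rw [← Finset.sum_product']
  apply Finset.sum_nbij' (fun k => (k / M, k % M)) (fun p => p.1 * M + p.2)
  · intro k hk
    simp only [Finset.mem_range] at hk
    have hM : 0 < M := by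
      rcases Nat.eq_zero_or_pos M with h | h
      · subst h; simp at hk
      · exact h
    simp only [Finset.mem_product, Finset.mem_range]
    exact ⟨Nat.div_lt_of_lt_mul (by rwa [mul_comm] at hk), Nat.mod_lt _ hM⟩
  · intro p hp
    simp only [Finset.mem_product, Finset.mem_range] at hp
    simp only [Finset.mem_range]
    calc p.1 * M + p.2 < p.1 * M + M := by omega
    _ = (p.1 + 1) * M := by ring
    _ ≤ N * M := Nat.mul_le_mul_right _ hp.1
  · intro k hk
    simp only
    rw [mul_comm, Nat.div_add_mod]
  · intro p hp
    simp only [Finset.mem_product, Finset.mem_range] at hp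
    have hM : 0 < M := by omega
    have h1 : (p.1 * M + p.2) / M = p.1 := by
      rw [mul_comm, Nat.mul_add_div hM, Nat.div_eq_of_lt hp.2, add_zero]
    have h2 : (p.1 * M + p.2) % M = p.2 := by
      rw [add_comm, Nat.add_mul_mod_self_right, Nat.mod_eq_of_lt hp.2]
    simp [h1, h2]
  · intro k hk
    congr 1
    rw [mul_comm, Nat.div_add_mod]

lemma expand_sq (N : ℕ) (w : ℕ → ℂ) (φ : ℝ) :
    (∑ m ∈ range N, w m * Complex.exp (Complex.I * m * φ)) *
      (starRingEnd ℂ) (∑ m ∈ range N, w m * Complex.exp (Complex.I * m * φ))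
    = (∑ m ∈ range N, w m * (starRingEnd ℂ) (w m))
      + ((∑ τ ∈ Ico 1 N, (starRingEnd ℂ) (Complex.exp (Complex.I * τ * φ)) * aacf N w τ)
      + (starRingEnd ℂ) (∑ τ ∈ Ico 1 N, (starRingEnd ℂ) (Complex.exp (Complex.I * τ * φ)) * aacf N w τ)) := by
  set E : ℕ → ℂ := fun m => Complex.exp (Complex.I * m * φ) with hE
  have hEmul : ∀ m : ℕ, E m * (starRingEnd ℂ) (E m) = 1 := fun m => expI_mul_conj m φ
  have hEadd : ∀ m τ : ℕ, E (m + τ) = E m * E τ := fun m τ => expI_add m τ φ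
  rw [map_sum, Finset.sum_mul_sum, ← Finset.sum_product']
  set f : ℕ × ℕ → ℂ := fun p => (w p.1 * E p.1) * (starRingEnd ℂ) (w p.2 * E p.2) with hf
  set s : Finset (ℕ × ℕ) := range N ×ˢ range N with hs
  have hsplit : ∑ p ∈ s, f p
      = ∑ p ∈ s.filter (fun p => p.1 = p.2), f p
        + (∑ p ∈ s.filter (fun p => p.1 < p.2), f p
          + ∑ p ∈ s.filter (fun p => p.2 < p.1), f p) := by
    rw [← Finset.sum_filter_add_sum_filter_not s (fun p => p.1 = p.2)]
    congr 1
    rw [← Finset.sum_filter_add_sum_filter_not (s.filter (fun p => ¬ p.1 = p.2)) (fun p => p.1 < p.2),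
      Finset.filter_filter, Finset.filter_filter]
    congr 1
    · apply Finset.sum_congr _ (fun _ _ => rfl)
      apply Finset.filter_congr
      intro p _
      constructor
      · rintro ⟨h1, h2⟩; exact h2
      · intro h; exact ⟨by omega, h⟩
    · apply Finset.sum_congr _ (fun _ _ => rfl)
      apply Finset.filter_congr
      intro p _
      constructor
      · rintro ⟨h1, h2⟩; omega
      · intro h; omega
  rw [hsplit]
  have hdiag : ∑ p ∈ s.filter (fun p => p.1 = p.2), f p
      = ∑ m ∈ range N, w m * (starRingEnd ℂ) (w m) := by
    apply Finset.sum_nbij' (fun p => p.1) (fun m => (m, m))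
    · intro p hp
      simp only [hs, Finset.mem_filter, Finset.mem_product, Finset.mem_range] at hp
      simp only [Finset.mem_range]
      exact hp.1.1
    · intro m hm
      simp only [Finset.mem_range] at hm
      simp only [hs, Finset.mem_filter, Finset.mem_product, Finset.mem_range]
      exact ⟨⟨hm, hm⟩, trivial⟩
    · intro p hp
      simp only [hs, Finset.mem_filter] at hp
      have := hp.2
      ext <;> simp [this.symm]
    · intro m _; rfl
    · intro p hp
      simp only [hs, Finset.mem_filter] at hp
      have h2 : p.2 = p.1 := hp.2.symm
      simp only [hf, h2, map_mul]
      linear_combination (w p.1 * (starRingEnd ℂ) (w p.1)) * hEmul p.1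
  have hupper : ∑ p ∈ s.filter (fun p => p.1 < p.2), f p
      = ∑ τ ∈ Ico 1 N, (starRingEnd ℂ) (E τ) * aacf N w τ := by
    have : ∀ τ ∈ Ico 1 N, (starRingEnd ℂ) (E τ) * aacf N w τ
        = ∑ m ∈ range (N - τ), (starRingEnd ℂ) (E τ) * (w m * (starRingEnd ℂ) (w (m + τ))) := by
      intro τ _
      rw [aacf, Finset.mul_sum]
    rw [Finset.sum_congr rfl this, Finset.sum_sigma']
    apply Finset.sum_nbij' (fun p : ℕ × ℕ => (⟨p.2 - p.1, p.1⟩ : Σ _ : ℕ, ℕ))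
      (fun q : Σ _ : ℕ, ℕ => (q.2, q.2 + q.1))
    · intro p hp
      simp only [hs, Finset.mem_filter, Finset.mem_product, Finset.mem_range] at hp
      simp only [Finset.mem_sigma, Finset.mem_Ico, Finset.mem_range]
      omega
    · intro q hq
      simp only [Finset.mem_sigma, Finset.mem_Ico, Finset.mem_range] at hq
      simp only [hs, Finset.mem_filter, Finset.mem_product, Finset.mem_range]
      omega
    · intro p hp
      simp only [hs, Finset.mem_filter, Finset.mem_product, Finset.mem_range] at hp
      ext <;> simp <;> omega
    · intro q hq
      simp only [Finset.mem_sigma, Finset.mem_Ico, Finset.mem_range] at hq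
      ext <;> simp <;> omega
    · intro p hp
      simp only [hs, Finset.mem_filter, Finset.mem_product, Finset.mem_range] at hp
      simp only [hf]
      obtain ⟨k, hk⟩ : ∃ k, p.2 = p.1 + k := ⟨p.2 - p.1, by omega⟩
      rw [hk, Nat.add_sub_cancel_left, hEadd p.1 k, map_mul, map_mul]
      linear_combination ((starRingEnd ℂ) (E k) * w p.1
        * (starRingEnd ℂ) (w (p.1 + k))) * hEmul p.1
  have hlower : ∑ p ∈ s.filter (fun p => p.2 < p.1), f p
      = (starRingEnd ℂ) (∑ p ∈ s.filter (fun p => p.1 < p.2), f p) := by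
    rw [map_sum]
    apply Finset.sum_nbij' Prod.swap Prod.swap
    · intro p hp
      simp only [hs, Finset.mem_filter, Finset.mem_product, Finset.mem_range] at hp ⊢
      simp only [Prod.fst_swap, Prod.snd_swap]
      omega
    · intro p hp
      simp only [hs, Finset.mem_filter, Finset.mem_product, Finset.mem_range] at hp ⊢
      simp only [Prod.fst_swap, Prod.snd_swap]
      omega
    · intro p _; simp
    · intro p _; simp
    · intro p _
      simp only [hf, Prod.fst_swap, Prod.snd_swap, map_mul, Complex.conj_conj]
      ring
  rw [hdiag, hupper, hlower, hupper]

lemma flat_c (N : ℕ) (u v : ℕ → ℂ)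
    (hu : ∀ l < N, ‖u l‖ = 1) (hv : ∀ l < N, ‖v l‖ = 1)
    (hG : ∀ τ, 1 ≤ τ → τ < N → aacf N u τ + aacf N v τ = 0) (φ : ℝ) :
    arrayFactor N u φ * (starRingEnd ℂ) (arrayFactor N u φ)
      + arrayFactor N v φ * (starRingEnd ℂ) (arrayFactor N v φ) = 2 * N := by
  unfold arrayFactor
  rw [expand_sq, expand_sq]
  have hdiag : ∀ w : ℕ → ℂ, (∀ l < N, ‖w l‖ = 1) →
      ∑ m ∈ range N, w m * (starRingEnd ℂ) (w m) = (N : ℂ) := by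
    intro w hw
    rw [Finset.sum_congr rfl (fun m hm => ?_), Finset.sum_const, nsmul_eq_mul,
      Finset.card_range, mul_one]
    rw [Complex.mul_conj, Complex.normSq_eq_norm_sq, hw m (Finset.mem_range.mp hm)]
    norm_num
  have hT : (∑ τ ∈ Ico 1 N, (starRingEnd ℂ) (Complex.exp (Complex.I * τ * φ)) * aacf N u τ)
      + (∑ τ ∈ Ico 1 N, (starRingEnd ℂ) (Complex.exp (Complex.I * τ * φ)) * aacf N v τ) = 0 := by
    rw [← Finset.sum_add_distrib]
    apply Finset.sum_eq_zero
    intro τ hτ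
    simp only [Finset.mem_Ico] at hτ
    rw [← mul_add, hG τ hτ.1 hτ.2, mul_zero]
  have hT' : (starRingEnd ℂ) (∑ τ ∈ Ico 1 N, (starRingEnd ℂ) (Complex.exp (Complex.I * τ * φ)) * aacf N u τ)
      + (starRingEnd ℂ) (∑ τ ∈ Ico 1 N, (starRingEnd ℂ) (Complex.exp (Complex.I * τ * φ)) * aacf N v τ) = 0 := by
    rw [← map_add, hT, map_zero]
  rw [hdiag u hu, hdiag v hv]
  linear_combination hT + hT'

lemma block_sum (N M s : ℕ) (w a b : ℕ → ℂ) (ψ : ℝ)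
    (h : ∀ l < N, ∀ m < M, w (s + (l * M + m)) = a l * b m) :
    ∑ k ∈ Finset.range (N * M), w (s + k) * Complex.exp (Complex.I * ((s + k : ℕ) : ℂ) * ψ)
      = Complex.exp (Complex.I * s * ψ) * arrayFactor N a ((M : ℝ) * ψ) * arrayFactor M b ψ := by
  rw [sum_range_mul']
  unfold arrayFactor
  rw [mul_assoc, Finset.sum_mul_sum, Finset.mul_sum]
  apply Finset.sum_congr rfl
  intro l hl
  rw [Finset.mul_sum]
  apply Finset.sum_congr rfl
  intro m hm
  rw [h l (Finset.mem_range.mp hl) m (Finset.mem_range.mp hm)]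
  have hexp : Complex.exp (Complex.I * ((s + (l * M + m) : ℕ) : ℂ) * ψ)
      = Complex.exp (Complex.I * s * ψ) *
        (Complex.exp (Complex.I * l * (((M : ℝ) * ψ : ℝ) : ℂ)) * Complex.exp (Complex.I * m * ψ)) := by
    rw [← Complex.exp_add, ← Complex.exp_add]
    congr 1
    push_cast
    ring
  rw [hexp]
  ring

lemma reflect_sum (M : ℕ) (b : ℕ → ℂ) (ψ : ℝ) :
    arrayFactor M (fun m => (starRingEnd ℂ) (b (M - 1 - m))) ψ
      = Complex.exp (Complex.I * ((M - 1 : ℕ) : ℂ) * ψ) *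
        (starRingEnd ℂ) (arrayFactor M b ψ) := by
  unfold arrayFactor
  rw [map_sum, Finset.mul_sum,
    ← Finset.sum_range_reflect (fun m => (starRingEnd ℂ) (b (M - 1 - m)) * Complex.exp (Complex.I * m * ψ)) M]
  apply Finset.sum_congr rfl
  intro m hm
  simp only [Finset.mem_range] at hm
  have h1 : M - 1 - (M - 1 - m) = m := by omega
  rw [h1, map_mul, expI_conj]
  have hexp : Complex.exp (Complex.I * ((M - 1 - m : ℕ) : ℂ) * ψ)
      = Complex.exp (Complex.I * ((M - 1 : ℕ) : ℂ) * ψ) * Complex.exp (-(Complex.I * m * ψ)) := by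
    rw [← Complex.exp_add]
    congr 1
    rw [Nat.cast_sub (by omega : m ≤ M - 1)]
    ring
  rw [hexp]
  ring

lemma neg_arrayFactor (N : ℕ) (v : ℕ → ℂ) (φ : ℝ) :
    arrayFactor N (fun l => -(v l)) φ = -arrayFactor N v φ := by
  unfold arrayFactor
  rw [← Finset.sum_neg_distrib]
  exact Finset.sum_congr rfl (fun l _ => by ring)

/-- Equation (44): if both the expanders and the protoarray weights are Golay
complementary pairs, the expanded array's sum power-domain array factor is flat. -/
theorem golay_expansion_fully_broad (N M : ℕ) (hN : 1 ≤ N) (hM : 1 ≤ M)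
    (u v wPA wPB wA wB : ℕ → ℂ)
    (hu : ∀ l < N, ‖u l‖ = 1) (hv : ∀ l < N, ‖v l‖ = 1)
    (hGolayuv : ∀ τ, 1 ≤ τ → τ < N → aacf N u τ + aacf N v τ = 0)
    (hwPA : ∀ m < M, ‖wPA m‖ = 1)
    (hwPB : ∀ m < M, ‖wPB m‖ = 1)
    (hGolayP : ∀ τ, 1 ≤ τ → τ < M → aacf M wPA τ + aacf M wPB τ = 0)
    (hA1 : ∀ l < N, ∀ m < M, wA (l * M + m) = u l * wPA m)
    (hA2 : ∀ l < N, ∀ m < M,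
      wA (N * M + l * M + m) = -(v l * (starRingEnd ℂ) (wPB (M - 1 - m))))
    (hB1 : ∀ l < N, ∀ m < M, wB (l * M + m) = u l * wPB m)
    (hB2 : ∀ l < N, ∀ m < M,
      wB (N * M + l * M + m) = v l * (starRingEnd ℂ) (wPA (M - 1 - m)))
    (ψ : ℝ) :
    ‖arrayFactor (2 * N * M) wA ψ‖ ^ 2 +
        ‖arrayFactor (2 * N * M) wB ψ‖ ^ 2 = 4 * N * M := by
  have e1A := block_sum N M 0 wA u wPA ψ (fun l hl m hm => by simpa using hA1 l hl m hm)
  have e2A := block_sum N M (N * M) wA (fun l => -(v l))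
      (fun m => (starRingEnd ℂ) (wPB (M - 1 - m))) ψ
      (fun l hl m hm => by rw [← add_assoc, hA2 l hl m hm]; ring)
  rw [neg_arrayFactor, reflect_sum M wPB ψ] at e2A
  have e1B := block_sum N M 0 wB u wPB ψ (fun l hl m hm => by simpa using hB1 l hl m hm)
  have e2B := block_sum N M (N * M) wB v
      (fun m => (starRingEnd ℂ) (wPA (M - 1 - m))) ψ
      (fun l hl m hm => by rw [← add_assoc, hB2 l hl m hm])
  rw [reflect_sum M wPA ψ] at e2B
  have hsplit : ∀ w : ℕ → ℂ, arrayFactor (2 * N * M) w ψ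
      = (∑ k ∈ Finset.range (N * M), w (0 + k) * Complex.exp (Complex.I * ((0 + k : ℕ) : ℂ) * ψ))
        + ∑ k ∈ Finset.range (N * M), w (N * M + k) * Complex.exp (Complex.I * ((N * M + k : ℕ) : ℂ) * ψ) := by
    intro w
    unfold arrayFactor
    rw [show 2 * N * M = N * M + N * M by ring, Finset.sum_range_add]
    simp
  have splitA := hsplit wA
  rw [e1A, e2A] at splitA
  have splitB := hsplit wB
  rw [e1B, e2B] at splitB
  have h1 := flat_c N u v hu hv hGolayuv ((M : ℝ) * ψ)
  have h2 := flat_c M wPA wPB hwPA hwPB hGolayP ψ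
  have hC1 := expI_mul_conj (N * M) ψ
  have hD := expI_mul_conj (M - 1) ψ
  have key : arrayFactor (2 * N * M) wA ψ * (starRingEnd ℂ) (arrayFactor (2 * N * M) wA ψ)
      + arrayFactor (2 * N * M) wB ψ * (starRingEnd ℂ) (arrayFactor (2 * N * M) wB ψ)
      = ((4 * N * M : ℝ) : ℂ) := by
    rw [splitA, splitB]
    simp only [map_add, map_mul, map_neg, Complex.conj_conj, Nat.cast_zero, mul_zero,
      zero_mul, Complex.exp_zero, one_mul]
    push_cast at hC1 ⊢
    linear_combination (arrayFactor N v ((M : ℝ) * ψ) * (starRingEnd ℂ) (arrayFactor N v ((M : ℝ) * ψ))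
        * (arrayFactor M wPA ψ * (starRingEnd ℂ) (arrayFactor M wPA ψ)
          + arrayFactor M wPB ψ * (starRingEnd ℂ) (arrayFactor M wPB ψ))
        * Complex.exp (Complex.I * ((M - 1 : ℕ) : ℂ) * ψ)
        * (starRingEnd ℂ) (Complex.exp (Complex.I * ((M - 1 : ℕ) : ℂ) * ψ))) * hC1
      + (arrayFactor N v ((M : ℝ) * ψ) * (starRingEnd ℂ) (arrayFactor N v ((M : ℝ) * ψ))
        * (arrayFactor M wPA ψ * (starRingEnd ℂ) (arrayFactor M wPA ψ)
          + arrayFactor M wPB ψ * (starRingEnd ℂ) (arrayFactor M wPB ψ))) * hD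
      + (arrayFactor M wPA ψ * (starRingEnd ℂ) (arrayFactor M wPA ψ)
          + arrayFactor M wPB ψ * (starRingEnd ℂ) (arrayFactor M wPB ψ)) * h1
      + (2 * (N : ℂ)) * h2
  rw [Complex.mul_conj, Complex.mul_conj, ← Complex.ofReal_add] at key
  have hreal : Complex.normSq (arrayFactor (2 * N * M) wA ψ)
      + Complex.normSq (arrayFactor (2 * N * M) wB ψ) = 4 * N * M :=
    Complex.ofReal_injective key
  rw [Complex.sq_norm, Complex.sq_norm]
  exact hreal
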